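/- Let M be a timelike surface in ℝ^{n,1} with a canonical null direction with respect to a constant unit spacelike vector Z. Then A_{Z^⊥}(Z^⊤) = 0 and ∇_{Z^⊤} Z^⊤ = 0; in particular the integral curves of Z^⊤ are geodesics of M. -/
import Mathlib


/-- A_{Z^⊥}(Z^⊤) = 0 and ∇_{Z^⊤} Z^⊤ = 0 for a timelike surface with a canonical
null direction (so the integral curves of Z^⊤ are geodesics). -/
theorem stmt2
    (Mp T Nv : Type)
    [AddCommGroup T] [Module (Mp → ℝ) T]
    [AddCommGroup Nv] [Module (Mp → ℝ) Nv]
    -- the induced (Lorentzian) metric on tangent fields and the (Riemannian) metric on normal fields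
    (g : T → T → Mp → ℝ) (gN : Nv → Nv → Mp → ℝ)
    -- Levi-Civita connection of M, normal connection, second fundamental form, shape operator
    (D : T → T → T) (Dn : T → Nv → Nv)
    (II : T → T → Nv) (A : Nv → T → T)
    -- action of vector fields on functions, Lie bracket, gradient
    (d : T → (Mp → ℝ) → Mp → ℝ) (lie : T → T → T) (grad : (Mp → ℝ) → T)
    -- the tangent and normal parts of Z and the lightlike field W
    (ZT W : T) (ZP : Nv)
    (g_symm : ∀ X Y, g X Y = g Y X)
    (gN_symm : ∀ μ ν, gN μ ν = gN ν μ)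
    (gN_def : ∀ ν : Nv, gN ν ν = 0 → ν = 0)
    (II_symm : ∀ X Y, II X Y = II Y X)
    (shape : ∀ ν X Y, g (A ν X) Y = gN (II X Y) ν)
    (metr : ∀ X Y Y', d X (g Y Y') = g (D X Y) Y' + g Y (D X Y'))
    (metrN : ∀ X μ ν, d X (gN μ ν) = gN (Dn X μ) ν + gN μ (Dn X ν))
    (tors : ∀ X Y, lie X Y = D X Y - D Y X)
    (dconst : ∀ X (c : ℝ), d X (fun _ => c) = 0)
    (grad_def : ∀ h X, g (grad h) X = d X h)
    -- (Z^⊤, W) is a frame of lightlike tangent fields with ⟨Z^⊤, W⟩ = -1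
    (frame : ∀ v : T, v = (-(g v W)) • ZT + (-(g v ZT)) • W)
    (hZT : g ZT ZT = 0) (hZTne : ZT ≠ 0)
    (hW : g W W = 0) (hWne : W ≠ 0)
    (hZTW : g ZT W = fun _ => (-1 : ℝ))
    -- Z is unit spacelike, so Z^⊥ is a unit normal field
    (hZP : gN ZP ZP = fun _ => (1 : ℝ))
    -- the compatibility equations coming from Z being a constant vector field
    (compat1 : ∀ X, D X ZT = A ZP X)
    (compat2 : ∀ X, Dn X ZP = -(II ZT X))
    -- Codazzi equation (the ambient space is flat)
    (codazzi : ∀ X Y Y', Dn X (II Y Y') - II (D X Y) Y' - II Y (D X Y')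
        = Dn Y (II X Y') - II (D Y X) Y' - II X (D Y Y')) :
    A ZP ZT = 0 ∧ D ZT ZT = 0 := by
  have h1 : ∀ Y, g (D Y ZT) ZT = 0 := by
    intro Y
    have h := metr Y ZT ZT
    rw [hZT] at h
    have h0 : d Y (0 : Mp → ℝ) = 0 := dconst Y 0
    rw [h0] at h
    rw [g_symm ZT (D Y ZT)] at h
    funext p
    have := congrFun h.symm p
    simp only [Pi.add_apply, Pi.zero_apply] at this ⊢
    linarith
  have h2 : ∀ Y, g (A ZP ZT) Y = 0 := by
    intro Y
    calc g (A ZP ZT) Y = gN (II ZT Y) ZP := shape ZP ZT Y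
      _ = gN (II Y ZT) ZP := by rw [II_symm]
      _ = g (A ZP Y) ZT := (shape ZP Y ZT).symm
      _ = g (D Y ZT) ZT := by rw [compat1]
      _ = 0 := h1 Y
  have hv : A ZP ZT = 0 := by
    have hf := frame (A ZP ZT)
    rw [h2 W, h2 ZT] at hf
    simpa using hf
  exact ⟨hv, by rw [compat1]; exact hv⟩
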